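/- Let χ be a compact subset of ℝ^d, let σ : ℝ → ℝ be continuous, and fix r ≥ 1, V ≥ 4, M > 0. Then the class F(r, V, M) = { x ↦ α₀ + Σ_{j=1}^{r} α_j σ(γ_jᵀ x + γ_{0,j}) : γ_j ∈ ℝ^d, α_j, γ_{0,j} ∈ ℝ, Σ_{j=0}^{r} |α_j| ≤ V, max_{1≤j≤r} Σ_{i=0}^{d} |γ_{i,j}| ≤ M }, viewed as a subset of the space C(χ) of continuous real-valued functions on χ with the supremum norm, is compact. -/
import Mathlib


/-- On a compact `χ ⊆ ℝ^d`, for continuous `σ`, `r ≥ 1`, `V ≥ 4`, `M > 0`,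
the class `F(r, V, M)` of one-hidden-layer networks
`x ↦ α₀ + Σ_{j=1}^r α_j σ(γ_jᵀ x + γ_{0,j})` with `Σ_{j=0}^r |α_j| ≤ V` and
`max_{1≤j≤r} Σ_{i=0}^d |γ_{i,j}| ≤ M`, viewed as a subset of `C(χ)` with the supremum norm,
is compact. -/
theorem nnClass_isCompact
    (d r : ℕ) (hd : 1 ≤ d) (hr : 1 ≤ r) (V M : ℝ) (hV : 4 ≤ V) (hM : 0 < M)
    (σ : ℝ → ℝ) (hσ : Continuous σ)
    (χ : Set (Fin d → ℝ)) (hχ : IsCompact χ) :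
    IsCompact {F : C(χ, ℝ) |
      ∃ (α₀ : ℝ) (α : Fin r → ℝ) (γ₀ : Fin r → ℝ) (γ : Fin r → Fin d → ℝ),
        (∀ x : χ, F x = α₀ + ∑ j, α j * σ (∑ i, γ j i * (x : Fin d → ℝ) i + γ₀ j)) ∧
        |α₀| + ∑ j, |α j| ≤ V ∧
        ∀ j, |γ₀ j| + ∑ i, |γ j i| ≤ M} := by
  classical
  set P := ℝ × (Fin r → ℝ) × (Fin r → ℝ) × (Fin r → Fin d → ℝ)
  -- uncurried map is continuous
  have huncur : Continuous (fun q : P × χ =>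
      q.1.1 + ∑ j, q.1.2.1 j * σ (∑ i, q.1.2.2.2 j i * (q.2 : Fin d → ℝ) i + q.1.2.2.1 j)) := by
    apply Continuous.add
    · exact continuous_fst.fst
    · apply continuous_finset_sum
      intro j _
      apply Continuous.mul
      · exact (continuous_apply j).comp continuous_fst.snd.fst
      · apply hσ.comp
        apply Continuous.add
        · apply continuous_finset_sum
          intro i _
          exact ((continuous_apply i).comp ((continuous_apply j).comp
            continuous_fst.snd.snd.snd)).mul
            ((continuous_apply i).comp (continuous_subtype_val.comp continuous_snd))
        · exact (continuous_apply j).comp continuous_fst.snd.snd.fst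
  let Φ : P → C(χ, ℝ) := fun p =>
    ⟨fun x => p.1 + ∑ j, p.2.1 j * σ (∑ i, p.2.2.2 j i * (x : Fin d → ℝ) i + p.2.2.1 j),
     by
      have := huncur.comp (Continuous.prodMk_right p)
      exact this⟩
  have hΦ : Continuous Φ := by
    apply ContinuousMap.continuous_of_continuous_uncurry
    exact huncur
  set K : Set P := {p | (|p.1| + ∑ j, |p.2.1 j| ≤ V) ∧ ∀ j, |p.2.2.1 j| + ∑ i, |p.2.2.2 j i| ≤ M}
    with hKdef
  have hKclosed : IsClosed K := by
    have hA : IsClosed {p : P | |p.1| + ∑ j, |p.2.1 j| ≤ V} := by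
      apply isClosed_le _ continuous_const
      exact (continuous_abs.comp continuous_fst).add
          (continuous_finset_sum _ fun j _ =>
            continuous_abs.comp ((continuous_apply j).comp continuous_snd.fst))
    have hB : IsClosed {p : P | ∀ j, |p.2.2.1 j| + ∑ i, |p.2.2.2 j i| ≤ M} := by
      rw [Set.setOf_forall]
      apply isClosed_iInter
      intro j
      apply isClosed_le _ continuous_const
      exact (continuous_abs.comp ((continuous_apply j).comp continuous_snd.snd.fst)).add
          (continuous_finset_sum _ fun i _ =>
            continuous_abs.comp ((continuous_apply i).comp
              ((continuous_apply j).comp continuous_snd.snd.snd)))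
    exact hA.inter hB
  have hKsub : K ⊆ (Metric.closedBall (0:ℝ) V) ×ˢ (Metric.closedBall (0:Fin r → ℝ) V) ×ˢ
      (Metric.closedBall (0:Fin r → ℝ) M) ×ˢ (Metric.closedBall (0:Fin r → Fin d → ℝ) M) := by
    rintro ⟨α₀, α, γ₀, γ⟩ ⟨h1, h2⟩
    have hsumα : ∀ j, |α j| ≤ ∑ j, |α j| := fun j =>
      Finset.single_le_sum (f := fun j => |α j|) (fun _ _ => abs_nonneg _) (Finset.mem_univ j)
    have hsumγ : ∀ j, (0:ℝ) ≤ ∑ i, |γ j i| := fun j =>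
      Finset.sum_nonneg fun _ _ => abs_nonneg _
    refine ⟨?_, ?_, ?_, ?_⟩
    · simp only [Metric.mem_closedBall, Real.dist_eq, sub_zero]
      nlinarith [abs_nonneg α₀, Finset.sum_nonneg (fun j (_ : j ∈ Finset.univ) => abs_nonneg (α j))]
    · simp only [Metric.mem_closedBall, dist_pi_le_iff (by linarith : (0:ℝ) ≤ V)]
      intro j
      simp only [Real.dist_eq, Pi.zero_apply, sub_zero]
      have := hsumα j
      nlinarith [abs_nonneg α₀]
    · simp only [Metric.mem_closedBall, dist_pi_le_iff hM.le]
      intro j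
      simp only [Real.dist_eq, Pi.zero_apply, sub_zero]
      linarith [h2 j, hsumγ j]
    · simp only [Metric.mem_closedBall, dist_pi_le_iff hM.le]
      intro j
      intro i
      simp only [Real.dist_eq, Pi.zero_apply, sub_zero]
      have : |γ j i| ≤ ∑ i, |γ j i| :=
        Finset.single_le_sum (f := fun i => |γ j i|) (fun _ _ => abs_nonneg _) (Finset.mem_univ i)
      linarith [h2 j, abs_nonneg (γ₀ j)]
  have hKcompact : IsCompact K := by
    refine IsCompact.of_isClosed_subset ?_ hKclosed hKsub
    exact (isCompact_closedBall _ _).prod ((isCompact_closedBall _ _).prod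
      ((isCompact_closedBall _ _).prod (isCompact_closedBall _ _)))
  have himg : {F : C(χ, ℝ) |
      ∃ (α₀ : ℝ) (α : Fin r → ℝ) (γ₀ : Fin r → ℝ) (γ : Fin r → Fin d → ℝ),
        (∀ x : χ, F x = α₀ + ∑ j, α j * σ (∑ i, γ j i * (x : Fin d → ℝ) i + γ₀ j)) ∧
        |α₀| + ∑ j, |α j| ≤ V ∧
        ∀ j, |γ₀ j| + ∑ i, |γ j i| ≤ M} = Φ '' K := by
    ext F
    constructor
    · rintro ⟨α₀, α, γ₀, γ, hF, h1, h2⟩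
      exact ⟨(α₀, α, γ₀, γ), ⟨h1, h2⟩, ContinuousMap.ext fun x => (hF x).symm⟩
    · rintro ⟨⟨α₀, α, γ₀, γ⟩, ⟨h1, h2⟩, rfl⟩
      exact ⟨α₀, α, γ₀, γ, fun x => rfl, h1, h2⟩
  rw [himg]
  exact hKcompact.image hΦ
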